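/- arXiv:2009.13447 — 3 statements merged into one kernel-verified Lean document; each statement's English description precedes it below -/
import Mathlib

section
/- Let 0 < a1, a2, f1, f2 with a1 + a2 = 1 and f1 + f2 = 1, and η > 0. The reweighting stability condition (1 - η a2)^2 + η^2 f1 f2 (a2/f2)^2 ≤ 1 is equivalent to η a2 (1 + f1/f2) ≤ 2, i.e. η (a2/f2) ≤ 2. -/
/-- Reweighting stability: for positive `a1, a2, f1, f2` with `a1 + a2 = 1`,
`f1 + f2 = 1` and `η > 0`, the condition
`(1 - η a2)^2 + η^2 f1 f2 (a2/f2)^2 ≤ 1` is equivalent to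
`η a2 (1 + f1/f2) ≤ 2`, i.e. to `η (a2/f2) ≤ 2`. -/
theorem reweighting_stability_iff
    (a1 a2 f1 f2 η : ℝ) (ha1 : 0 < a1) (ha2 : 0 < a2) (hf1 : 0 < f1) (hf2 : 0 < f2)
    (hsa : a1 + a2 = 1) (hsf : f1 + f2 = 1) (hη : 0 < η) :
    ((1 - η * a2) ^ 2 + η ^ 2 * (f1 * f2 * (a2 / f2) ^ 2) ≤ 1 ↔
      η * a2 * (1 + f1 / f2) ≤ 2) ∧
    ((1 - η * a2) ^ 2 + η ^ 2 * (f1 * f2 * (a2 / f2) ^ 2) ≤ 1 ↔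
      η * (a2 / f2) ≤ 2) := by
  have hf2' : f2 ≠ 0 := ne_of_gt hf2
  have key : 1 + f1 / f2 = 1 / f2 := by field_simp; linarith
  have hL : (1 - η * a2) ^ 2 + η ^ 2 * (f1 * f2 * (a2 / f2) ^ 2)
      = 1 - 2 * η * a2 + η ^ 2 * a2 ^ 2 * (1 / f2) := by
    have : f1 = 1 - f2 := by linarith
    field_simp [this]; rw [this]; ring
  have hpos : 0 < η * a2 := mul_pos hη ha2
  constructor
  · rw [hL, key]
    constructor
    · intro h
      have h2 : η ^ 2 * a2 ^ 2 * (1 / f2) ≤ 2 * η * a2 := by linarith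
      have := (mul_le_mul_iff_of_pos_right hpos).mpr (le_refl (1:ℝ))
      nlinarith
    · intro h
      nlinarith
  · rw [hL, show η * (a2 / f2) = η * a2 * (1 / f2) by ring]
    constructor
    · intro h
      have h2 : η ^ 2 * a2 ^ 2 * (1 / f2) ≤ 2 * η * a2 := by linarith
      nlinarith [mul_pos hpos hf2]
    · intro h
      nlinarith [mul_pos hpos hf2, sq_nonneg (η * a2)]
end

section
/- Let 0 < a1 < a2 with a1 + a2 = 1, let f1 + f2 = 1 with 0 < f2 < f1, and let η satisfy η (a2/f2) > 2 and η (a1/f1) ≤ 2 - η f2 a1^2/(f1^2) (equivalently η a1 (1 + f2/f1) ≤ 2). Then the reweighting stability condition holds at the non-global minimizer (group 1) but fails at the global minimizer (group 2). -/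
/-- If `η (a2/f2) > 2` while `η a1 (1 + f2/f1) ≤ 2`, then the reweighting
stability condition holds at the non-global minimizer (group 1) but fails at
the global minimizer (group 2). -/
theorem reweighting_wrong_minimizer_stable
    (a1 a2 f1 f2 η : ℝ) (ha1 : 0 < a1) (ha : a1 < a2) (hsa : a1 + a2 = 1)
    (hf2 : 0 < f2) (hf : f2 < f1) (hsf : f1 + f2 = 1) (hη : 0 < η)
    (hbad : η * (a2 / f2) > 2) (hgood : η * a1 * (1 + f2 / f1) ≤ 2) :
    (1 - η * a1) ^ 2 + η ^ 2 * (f1 * f2 * (a1 / f1) ^ 2) ≤ 1 ∧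
    ¬ ((1 - η * a2) ^ 2 + η ^ 2 * (f1 * f2 * (a2 / f2) ^ 2) ≤ 1) := by
  have hf1 : 0 < f1 := lt_trans hf2 hf
  have hkey : η * a1 ≤ 2 * f1 := by
    have h := mul_le_mul_of_nonneg_right hgood hf1.le
    have e : η * a1 * (1 + f2 / f1) * f1 = η * a1 * (f1 + f2) := by
      field_simp
    rw [e, hsf, mul_one] at h
    linarith
  have hkey2 : 2 * f2 < η * a2 := by
    have h := mul_lt_mul_of_pos_right hbad hf2
    have e : η * (a2 / f2) * f2 = η * a2 := by field_simp
    rw [e] at h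
    linarith
  have e1 : (1 - η * a1) ^ 2 + η ^ 2 * (f1 * f2 * (a1 / f1) ^ 2) - 1
      = (η * a1 / f1) * (η * a1 * (f1 + f2) - 2 * f1) := by
    field_simp
    ring
  have e2 : (1 - η * a2) ^ 2 + η ^ 2 * (f1 * f2 * (a2 / f2) ^ 2) - 1
      = (η * a2 / f2) * (η * a2 * (f1 + f2) - 2 * f2) := by
    field_simp
    ring
  rw [hsf, mul_one] at e1 e2
  constructor
  · have h1 : (η * a1 / f1) * (η * a1 - 2 * f1) ≤ 0 :=
      mul_nonpos_of_nonneg_of_nonpos (by positivity) (by linarith)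
    linarith
  · push_neg
    have h2 : 0 < (η * a2 / f2) * (η * a2 - 2 * f2) :=
      mul_pos (by exact div_pos (mul_pos hη (lt_trans ha1 ha)) hf2) (by linarith)
    linarith
end

section
/- Let a1, a2, f1, f2 ∈ (0,1) with a1 + a2 = 1, f1 + f2 = 1, a2 > a1, and let V(1) < V(−1) < 0. If f2/f1 ≤ (a2/a1)·√(V(−1)/V(1)), then (a1²/f1²)/(a2²/f2²) · exp(−(2 f2/f1)/(a2² η) · V(1) + (2 f1/f2)/(a1² η) · V(−1)) < 1 for every η > 0. -/
/-- Reweighting stationary ratio is below one: under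
`f2/f1 ≤ (a2/a1)√(V(-1)/V(1))` with `V(1) < V(-1) < 0`, the quantity
`(a1²/f1²)/(a2²/f2²) · exp(-(2f2/f1)/(a2²η) V(1) + (2f1/f2)/(a1²η) V(-1))`
is `< 1` for every `η > 0`. Here `v1 = V(1)` and `vm1 = V(-1)`. -/
theorem reweighting_stationary_ratio_lt_one
    (a1 a2 f1 f2 v1 vm1 : ℝ)
    (ha1 : 0 < a1) (ha1' : a1 < 1) (ha2 : 0 < a2) (ha2' : a2 < 1)
    (hf1 : 0 < f1) (hf1' : f1 < 1) (hf2 : 0 < f2) (hf2' : f2 < 1)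
    (hsa : a1 + a2 = 1) (hsf : f1 + f2 = 1) (ha : a1 < a2)
    (hv : v1 < vm1) (hv0 : vm1 < 0)
    (hcond : f2 / f1 ≤ (a2 / a1) * Real.sqrt (vm1 / v1)) :
    ∀ η : ℝ, 0 < η →
      (a1 ^ 2 / f1 ^ 2) / (a2 ^ 2 / f2 ^ 2) *
        Real.exp (-(2 * (f2 / f1)) / (a2 ^ 2 * η) * v1 +
          (2 * (f1 / f2)) / (a1 ^ 2 * η) * vm1) < 1 := by
  intro η hη
  have hv1 : v1 < 0 := hv.trans hv0
  have hs0 : 0 ≤ vm1 / v1 := le_of_lt (div_pos_of_neg_of_neg hv0 hv1)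
  -- square the hypothesis
  have hsq : (f2 / f1) ^ 2 ≤ (a2 / a1) ^ 2 * (vm1 / v1) := by
    have h := pow_le_pow_left₀ (le_of_lt (div_pos hf2 hf1)) hcond 2
    rwa [mul_pow, Real.sq_sqrt hs0] at h
  -- key polynomial inequality
  have key2 : f2 ^ 2 * a1 ^ 2 * (-v1) ≤ f1 ^ 2 * a2 ^ 2 * (-vm1) := by
    have h := mul_le_mul_of_nonneg_right hsq
      (show (0:ℝ) ≤ f1 ^ 2 * a1 ^ 2 * (-v1) from
        mul_nonneg (by positivity) (by linarith))
    have e1 : (f2 / f1) ^ 2 * (f1 ^ 2 * a1 ^ 2 * (-v1)) = f2 ^ 2 * a1 ^ 2 * (-v1) := by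
      field_simp [hf1.ne']
    have e2 : (a2 / a1) ^ 2 * (vm1 / v1) * (f1 ^ 2 * a1 ^ 2 * (-v1))
        = f1 ^ 2 * a2 ^ 2 * (-vm1) := by
      field_simp [ha1.ne', hv1.ne]
    rwa [e1, e2] at h
  -- the exponent is nonpositive
  have hXeq : -(2 * (f2 / f1)) / (a2 ^ 2 * η) * v1 + (2 * (f1 / f2)) / (a1 ^ 2 * η) * vm1
      = (2 * (f2 ^ 2 * a1 ^ 2 * (-v1) - f1 ^ 2 * a2 ^ 2 * (-vm1)))
        / (f1 * f2 * a1 ^ 2 * a2 ^ 2 * η) := by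
    field_simp
    ring
  have hE : -(2 * (f2 / f1)) / (a2 ^ 2 * η) * v1 + (2 * (f1 / f2)) / (a1 ^ 2 * η) * vm1 ≤ 0 := by
    rw [hXeq]
    apply div_nonpos_of_nonpos_of_nonneg
    · linarith
    · positivity
  have hexp : Real.exp (-(2 * (f2 / f1)) / (a2 ^ 2 * η) * v1 +
      (2 * (f1 / f2)) / (a1 ^ 2 * η) * vm1) ≤ 1 := by
    rw [← Real.exp_zero]
    exact Real.exp_le_exp.mpr hE
  -- the prefactor is < 1
  have hrr : (a1 ^ 2 / f1 ^ 2) / (a2 ^ 2 / f2 ^ 2) = (a1 / a2) ^ 2 * (f2 / f1) ^ 2 := by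
    field_simp
  have hr1 : (a1 / a2) ^ 2 * (f2 / f1) ^ 2 ≤ (a1 / a2) ^ 2 * ((a2 / a1) ^ 2 * (vm1 / v1)) :=
    mul_le_mul_of_nonneg_left hsq (by positivity)
  have hr2 : (a1 / a2) ^ 2 * ((a2 / a1) ^ 2 * (vm1 / v1)) = vm1 / v1 := by
    have hone : (a1 / a2) ^ 2 * (a2 / a1) ^ 2 = 1 := by
      field_simp
    rw [← mul_assoc, hone, one_mul]
  have hlt1 : vm1 / v1 < 1 := by
    rw [div_lt_one_iff]
    exact Or.inr (Or.inr ⟨hv1, hv⟩)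
  have hr : (a1 ^ 2 / f1 ^ 2) / (a2 ^ 2 / f2 ^ 2) < 1 := by
    rw [hrr]
    calc (a1 / a2) ^ 2 * (f2 / f1) ^ 2 ≤ vm1 / v1 := by rw [← hr2]; exact hr1
      _ < 1 := hlt1
  calc (a1 ^ 2 / f1 ^ 2) / (a2 ^ 2 / f2 ^ 2) *
        Real.exp (-(2 * (f2 / f1)) / (a2 ^ 2 * η) * v1 +
          (2 * (f1 / f2)) / (a1 ^ 2 * η) * vm1)
      ≤ (a1 ^ 2 / f1 ^ 2) / (a2 ^ 2 / f2 ^ 2) * 1 :=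
        mul_le_mul_of_nonneg_left hexp (by positivity)
    _ = (a1 ^ 2 / f1 ^ 2) / (a2 ^ 2 / f2 ^ 2) := mul_one _
    _ < 1 := hr
end
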